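/- For every symmetric bilinear form P on V and every τ ∈ V, Σ_{i=1}^{n+1} {e_i^*, {P(e_i, ·), τ}} = −2·P(τ, ·) + (tr_g P)·g(τ, ·), where P(v, ·) ∈ V* denotes the 1-form obtained by inserting v into P, and tr_g P := Σ_i ε_i P(e_i, e_i). -/

import Mathlib

/- Setup: (V,g) an (n+1)-dimensional real vector space with a nondegenerate
symmetric bilinear form of signature (1,n), an orthonormal basis (e_i) with
ε_i = g(e_i,e_i) ∈ {±1}, the musical isomorphism ♯ : V* → V, and the algebraic
bracket of the adjoint tractor bundle of conformal geometry:
{v, η} = v⊗η − η^♯⊗v^♭ + η(v)·id ∈ End(V) (as `brVeta`), together with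
{v, ψ} = −ψ(v) ∈ V, {η, ψ} = η∘ψ ∈ V*, {η, v} = −{v, η}.
The dual basis e_i^* is `b.coord i`. -/

/-- For every symmetric bilinear form P on V and every τ ∈ V,
Σ_i {e_i^*, {P(e_i,·), τ}} = −2·P(τ,·) + (tr_g P)·g(τ,·), where
{P(e_i,·), τ} = −{τ, P(e_i,·)} ∈ End(V) and tr_g P = Σ_i ε_i P(e_i,e_i). -/
theorem stmt18 (n : ℕ) (hn : 1 ≤ n)
    (V : Type) [AddCommGroup V] [Module ℝ V]
    (g : LinearMap.BilinForm ℝ V)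
    (hgsym : ∀ x y : V, g x y = g y x)
    (b : Module.Basis (Fin (n + 1)) ℝ V) (ε : Fin (n + 1) → ℝ)
    (hb : ∀ i j, g (b i) (b j) = if i = j then ε i else 0)
    (hε : ∀ i, ε i = -1 ∨ ε i = 1)
    (hsig : (Finset.univ.filter fun i => ε i = -1).card = 1)
    (sharp : (V →ₗ[ℝ] ℝ) → V)
    (hsharp : ∀ (η : V →ₗ[ℝ] ℝ) (x : V), g (sharp η) x = η x)
    (brVeta : V → (V →ₗ[ℝ] ℝ) → (V →ₗ[ℝ] V))
    (hbrVeta : ∀ (v : V) (η : V →ₗ[ℝ] ℝ) (x : V),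
      brVeta v η x = η x • v - g v x • sharp η + η v • x)
    (P : LinearMap.BilinForm ℝ V)
    (hPsym : ∀ x y : V, P x y = P y x)
    (τ : V) :
    ∑ i, (b.coord i).comp (-(brVeta τ (P (b i))))
      = (-2 : ℝ) • P τ + (∑ i, ε i * P (b i) (b i)) • g τ := by
  have hεsq : ∀ i, ε i * ε i = 1 := fun i => by rcases hε i with h | h <;> rw [h] <;> ring
  have hx_expand : ∀ (f : V →ₗ[ℝ] ℝ) (x : V), f x = ∑ i, b.coord i x * f (b i) := by
    intro f x
    conv_lhs => rw [← b.sum_repr x]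
    rw [map_sum]
    simp [Module.Basis.coord_apply, mul_comm]
  have hcoord_sharp : ∀ (η : V →ₗ[ℝ] ℝ) i, b.coord i (sharp η) = ε i * η (b i) := by
    intro η i
    have h2 := hx_expand (g (b i)) (sharp η)
    rw [Finset.sum_eq_single i (fun j _ hj => by rw [hgsym (b i) (b j), hb j i]; simp [hj])
      (by simp)] at h2
    rw [hb i i, if_pos rfl, hgsym (b i) (sharp η), hsharp] at h2
    calc b.coord i (sharp η) = b.coord i (sharp η) * ε i * ε i := by
          rw [mul_assoc, hεsq, mul_one]
      _ = ε i * η (b i) := by rw [← h2, mul_comm]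
  ext x
  have hτ : ∑ i, P (b i) x * b.coord i τ = P τ x := by
    rw [hPsym τ x, hx_expand (P x) τ]
    exact Finset.sum_congr rfl fun i _ => by rw [mul_comm, hPsym (b i) x]
  have hx' : ∑ i, P (b i) τ * b.coord i x = P τ x := by
    rw [hx_expand (P τ) x]
    exact Finset.sum_congr rfl fun i _ => by rw [mul_comm, hPsym (b i) τ]
  simp only [LinearMap.coe_sum, Finset.sum_apply, LinearMap.comp_apply,
    LinearMap.neg_apply, hbrVeta, LinearMap.add_apply, LinearMap.smul_apply,
    smul_eq_mul]
  have key : ∀ i, b.coord i (-((P (b i)) x • τ - (g τ) x • sharp (P (b i)) + (P (b i)) τ • x))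
      = -(P (b i) x * b.coord i τ) + g τ x * (ε i * P (b i) (b i)) - P (b i) τ * b.coord i x := by
    intro i
    rw [map_neg, map_add, map_sub, map_smul, map_smul, map_smul, hcoord_sharp]
    simp only [smul_eq_mul]
    ring
  rw [Finset.sum_congr rfl fun i _ => key i, Finset.sum_sub_distrib, Finset.sum_add_distrib,
    ← Finset.mul_sum, hx']
  rw [show (∑ i, -(P (b i) x * b.coord i τ)) = -∑ i, P (b i) x * b.coord i τ by
    rw [Finset.sum_neg_distrib], hτ]
  ring
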